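/- Let A be a unital C*-algebra, φ : A → M_n(ℂ) a positive unital linear map, f a convex function on an open interval I, and a ∈ A self-adjoint with spectrum in I. Then for each k = 1, …, n, the sum of the k largest eigenvalues of f(φ(a)) is at most the sum of the k largest eigenvalues of φ(f(a)). -/

import Mathlib

open scoped ComplexOrder

/-- The eigenvalues of a (Hermitian) matrix arranged in non-increasing order, counted
with multiplicity; junk value `0` for non-Hermitian matrices. -/
noncomputable def eigDesc {n : ℕ} (A : Matrix (Fin n) (Fin n) ℂ) (i : Fin n) : ℝ :=
  if h : A.IsHermitian then (h.eigenvalues ∘ Tuple.sort h.eigenvalues) i.rev else 0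

open Matrix

section Combinatorics

/-- Sum of the `k` largest entries of a tuple. -/
noncomputable def dSortTop {n : ℕ} (w : Fin n → ℝ) (k : ℕ) : ℝ :=
  ∑ i ∈ Finset.univ.filter (fun i : Fin n => (i : ℕ) < k), (w ∘ Tuple.sort w) i.rev

lemma card_filter_ge {n k : ℕ} (hk : k ≤ n) :
    (Finset.univ.filter fun i : Fin n => n - k ≤ (i : ℕ)).card = k := by
  have : (Finset.univ.filter fun i : Fin n => n - k ≤ (i : ℕ)) =
      (Finset.Ico (n - k) n).attachFin (fun m hm => (Finset.mem_Ico.mp hm).2) := by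
    ext i
    simp [Finset.mem_attachFin, Finset.mem_Ico, i.isLt]
  rw [this, Finset.card_attachFin, Nat.card_Ico]
  omega

lemma dSortTop_eq {n : ℕ} (w : Fin n → ℝ) (k : ℕ) (hk : k ≤ n) :
    dSortTop w k =
      ∑ i ∈ Finset.univ.filter (fun i : Fin n => n - k ≤ (i : ℕ)), w (Tuple.sort w i) := by
  unfold dSortTop
  rw [Finset.sum_filter, Finset.sum_filter,
    ← Equiv.sum_comp Fin.revPerm (fun i : Fin n => if n - k ≤ (i : ℕ) then w (Tuple.sort w i) else 0)]
  refine Finset.sum_congr rfl fun i _ => ?_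
  have hi : (i : ℕ) < n := i.isLt
  have hiff : ((i : ℕ) < k) ↔ (n - k ≤ ((Fin.revPerm i : Fin n) : ℕ)) := by
    simp only [Fin.revPerm_apply, Fin.val_rev]
    omega
  by_cases hc : (i : ℕ) < k
  · rw [if_pos hc, if_pos (hiff.mp hc)]
    rfl
  · rw [if_neg hc, if_neg (fun h => hc (hiff.mpr h))]

lemma exists_topSet {n : ℕ} (w : Fin n → ℝ) (k : ℕ) (hk : k ≤ n) :
    ∃ S : Finset (Fin n), S.card = k ∧ dSortTop w k = ∑ j ∈ S, w j := by
  refine ⟨(Finset.univ.filter (fun i : Fin n => n - k ≤ (i : ℕ))).image (Tuple.sort w), ?_, ?_⟩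
  · rw [Finset.card_image_of_injective _ (Tuple.sort w).injective, card_filter_ge hk]
  · rw [dSortTop_eq w k hk, Finset.sum_image]
    intro x _ y _ h
    exact (Tuple.sort w).injective h

/-- Linear programming bound: a substochastic combination of the entries of `w` with total
weight `k` is at most the sum of the `k` largest entries. -/
lemma lp_bound {n : ℕ} (w c : Fin n → ℝ) (k : ℕ) (hk : k ≤ n)
    (h0 : ∀ i, 0 ≤ c i) (h1 : ∀ i, c i ≤ 1) (hs : ∑ i, c i = k) :
    ∑ i, w i * c i ≤ dSortTop w k := by
  rcases Nat.eq_zero_or_pos k with hk0 | hkpos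
  · subst hk0
    have hc0 : ∀ i ∈ Finset.univ, c i = 0 := by
      intro i _
      have := (Finset.sum_eq_zero_iff_of_nonneg (fun i _ => h0 i)).mp (by simpa using hs) i
        (Finset.mem_univ i)
      exact this
    have : ∑ i, w i * c i = 0 := Finset.sum_eq_zero fun i hi => by rw [hc0 i hi, mul_zero]
    rw [this]
    simp [dSortTop, Finset.filter_false_of_mem]
  · set σ := Tuple.sort w with hσ
    set d : Fin n → ℝ := w ∘ σ with hdd
    have hd : Monotone d := Tuple.monotone_sort w
    set c' : Fin n → ℝ := c ∘ σ with hcc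
    have hLHS : ∑ i, w i * c i = ∑ i, d i * c' i :=
      (Equiv.sum_comp σ (fun i => w i * c i)).symm
    have hs' : ∑ i, c' i = k := by
      rw [hcc]
      rw [show ∑ i, (c ∘ σ) i = ∑ i, c (σ i) from rfl, Equiv.sum_comp σ c]
      exact hs
    have hnk : n - k < n := by omega
    set t : ℝ := d ⟨n - k, hnk⟩ with ht
    rw [hLHS, dSortTop_eq w k hk]
    have key : ∀ i : Fin n, d i * c' i ≤
        (if n - k ≤ (i : ℕ) then d i else 0) + t * (c' i - if n - k ≤ (i : ℕ) then 1 else 0) := by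
      intro i
      by_cases hcase : n - k ≤ (i : ℕ)
      · rw [if_pos hcase, if_pos hcase]
        have htd : t ≤ d i := hd (show (⟨n - k, hnk⟩ : Fin n) ≤ i by
          simp only [Fin.le_def, Fin.val_mk]; exact hcase)
        have h1' : c' i ≤ 1 := h1 (σ i)
        nlinarith [mul_nonneg (sub_nonneg.2 htd) (sub_nonneg.2 h1')]
      · rw [if_neg hcase, if_neg hcase]
        have htd : d i ≤ t := hd (show i ≤ (⟨n - k, hnk⟩ : Fin n) by
          simp only [Fin.le_def, Fin.val_mk]; omega)
        have h0' : (0:ℝ) ≤ c' i := h0 (σ i)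
        nlinarith [mul_nonneg (sub_nonneg.2 htd) h0']
    calc ∑ i, d i * c' i
        ≤ ∑ i : Fin n, ((if n - k ≤ (i : ℕ) then d i else 0)
            + t * (c' i - if n - k ≤ (i : ℕ) then 1 else 0)) :=
          Finset.sum_le_sum fun i _ => key i
      _ = (∑ i ∈ Finset.univ.filter (fun i : Fin n => n - k ≤ (i : ℕ)), d i)
            + t * ((∑ i : Fin n, c' i) -
              ∑ i : Fin n, (if n - k ≤ (i : ℕ) then (1 : ℝ) else 0)) := by
          rw [Finset.sum_add_distrib, Finset.sum_filter, ← Finset.mul_sum, Finset.sum_sub_distrib]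
      _ = ∑ i ∈ Finset.univ.filter (fun i : Fin n => n - k ≤ (i : ℕ)), d i := by
          rw [hs', ← Finset.sum_filter]
          simp only [Finset.sum_const, nsmul_eq_mul, mul_one]
          rw [card_filter_ge hk]
          ring
      _ = ∑ i ∈ Finset.univ.filter (fun i : Fin n => n - k ≤ (i : ℕ)), w (σ i) :=
          Finset.sum_congr rfl fun i _ => rfl

end Combinatorics

section QuadraticForms

/-- The (real part of the) quadratic form of a matrix at a vector. -/
noncomputable def qf {n : ℕ} (C : Matrix (Fin n) (Fin n) ℂ) (u : EuclideanSpace ℂ (Fin n)) : ℝ :=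
  RCLike.re (inner (𝕜 := ℂ) u ((Matrix.toEuclideanLin C) u))

lemma toEuclideanLin_eigen {n : ℕ} (C : Matrix (Fin n) (Fin n) ℂ)
    (x : EuclideanSpace ℂ (Fin n)) (ρ : ℝ) (h : C *ᵥ ⇑x = ρ • ⇑x) :
    Matrix.toEuclideanLin C x = (ρ : ℂ) • x := by
  ext j
  have := congrFun h j
  simp only [Matrix.toEuclideanLin_apply]
  simpa [Pi.smul_apply, Complex.real_smul] using this

lemma inner_mul_inner_self' {n : ℕ} (x y : EuclideanSpace ℂ (Fin n)) :
    (inner (𝕜 := ℂ) x y) * (inner (𝕜 := ℂ) y x) = ((‖(inner (𝕜 := ℂ) y x)‖ ^ 2 : ℝ) : ℂ) := by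
  rw [← inner_conj_symm x y, mul_comm, Complex.mul_conj, Complex.normSq_eq_norm_sq]

lemma parseval {n : ℕ} (v : OrthonormalBasis (Fin n) ℂ (EuclideanSpace ℂ (Fin n)))
    (x : EuclideanSpace ℂ (Fin n)) :
    ∑ j, ‖(inner (𝕜 := ℂ) (v j) x)‖ ^ 2 = ‖x‖ ^ 2 := by
  have h := v.sum_inner_mul_inner x x
  rw [Finset.sum_congr rfl (fun j _ => inner_mul_inner_self' x (v j)),
    ← Complex.ofReal_sum] at h
  have h4 : (inner (𝕜 := ℂ) x x) = ((‖x‖ ^ 2 : ℝ) : ℂ) := by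
    rw [inner_self_eq_norm_sq_to_K]; norm_cast
  rw [h4] at h
  exact_mod_cast h

lemma qf_eq_sum {n : ℕ} (C : Matrix (Fin n) (Fin n) ℂ)
    (v : OrthonormalBasis (Fin n) ℂ (EuclideanSpace ℂ (Fin n))) (ρ : Fin n → ℝ)
    (hC : ∀ i, C *ᵥ ⇑(v i) = ρ i • ⇑(v i)) (u : EuclideanSpace ℂ (Fin n)) :
    qf C u = ∑ i, ρ i * ‖(inner (𝕜 := ℂ) (v i) u)‖ ^ 2 := by
  have hT : ∀ i, Matrix.toEuclideanLin C (v i) = (ρ i : ℂ) • (v i) :=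
    fun i => toEuclideanLin_eigen C (v i) (ρ i) (hC i)
  have h2 : Matrix.toEuclideanLin C u
      = ∑ i, (inner (𝕜 := ℂ) (v i) u) • ((ρ i : ℂ) • (v i)) := by
    conv_lhs => rw [← v.sum_repr' u, map_sum]
    exact Finset.sum_congr rfl fun i _ => by rw [_root_.map_smul, hT i]
  have h3 : (inner (𝕜 := ℂ) u (Matrix.toEuclideanLin C u))
      = ∑ i, ((ρ i : ℂ) * (‖(inner (𝕜 := ℂ) (v i) u)‖ ^ 2 : ℝ)) := by
    rw [h2, inner_sum]
    refine Finset.sum_congr rfl fun i _ => ?_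
    rw [inner_smul_right, inner_smul_right, mul_comm (inner (𝕜 := ℂ) (v i) u),
      mul_assoc, inner_mul_inner_self' u (v i)]
  unfold qf
  rw [h3]
  rw [map_sum]
  refine Finset.sum_congr rfl fun i _ => ?_
  norm_cast

/-- The Ky Fan type bound: the sum over `k` orthonormal vectors of the quadratic forms of a
matrix which is diagonal in some orthonormal basis with (real) diagonal `ρ` is at most the sum
of the `k` largest entries of `ρ`. -/
lemma kyFan {n : ℕ} (C : Matrix (Fin n) (Fin n) ℂ)
    (v w : OrthonormalBasis (Fin n) ℂ (EuclideanSpace ℂ (Fin n))) (ρ : Fin n → ℝ)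
    (hC : ∀ i, C *ᵥ ⇑(v i) = ρ i • ⇑(v i)) (S : Finset (Fin n)) (k : ℕ)
    (hS : S.card = k) (hk : k ≤ n) :
    ∑ j ∈ S, qf C (w j) ≤ dSortTop ρ k := by
  set c : Fin n → ℝ := fun i => ∑ j ∈ S, ‖(inner (𝕜 := ℂ) (v i) (w j))‖ ^ 2 with hc
  have hLHS : ∑ j ∈ S, qf C (w j) = ∑ i, ρ i * c i := by
    rw [Finset.sum_congr rfl fun j _ => qf_eq_sum C v ρ hC (w j), Finset.sum_comm]
    exact Finset.sum_congr rfl fun i _ => by rw [hc, Finset.mul_sum]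
  rw [hLHS]
  refine lp_bound ρ c k hk (fun i => Finset.sum_nonneg fun j _ => by positivity)
    (fun i => ?_) ?_
  · calc c i ≤ ∑ j, ‖(inner (𝕜 := ℂ) (v i) (w j))‖ ^ 2 :=
        Finset.sum_le_sum_of_subset_of_nonneg (Finset.subset_univ S)
          (fun j _ _ => by positivity)
    _ = ‖v i‖ ^ 2 := by
        rw [Finset.sum_congr rfl fun j _ => by
          rw [norm_inner_symm (𝕜 := ℂ) (v i) (w j)]]
        exact parseval w (v i)
    _ = 1 := by rw [v.orthonormal.1 i]; norm_num
  · rw [Finset.sum_comm]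
    have : ∀ j ∈ S, ∑ i, ‖(inner (𝕜 := ℂ) (v i) (w j))‖ ^ 2 = 1 := by
      intro j _
      rw [parseval v (w j), w.orthonormal.1 j]
      norm_num
    rw [Finset.sum_congr rfl this, Finset.sum_const, hS, nsmul_eq_mul, mul_one]

lemma qf_apply_self {n : ℕ} (C : Matrix (Fin n) (Fin n) ℂ)
    (v : OrthonormalBasis (Fin n) ℂ (EuclideanSpace ℂ (Fin n))) (ρ : Fin n → ℝ)
    (hC : ∀ i, C *ᵥ ⇑(v i) = ρ i • ⇑(v i)) (j : Fin n) :
    qf C (v j) = ρ j := by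
  rw [qf_eq_sum C v ρ hC (v j)]
  rw [Finset.sum_eq_single j]
  · simp [inner_self_eq_norm_sq_to_K, v.orthonormal.1 j]
  · intro i _ hij
    rw [v.orthonormal.2 hij]
    norm_num
  · simp

lemma qf_sub {n : ℕ} (C D : Matrix (Fin n) (Fin n) ℂ) (u : EuclideanSpace ℂ (Fin n)) :
    qf (C - D) u = qf C u - qf D u := by
  unfold qf
  rw [map_sub, LinearMap.sub_apply, inner_sub_right, map_sub]

lemma qf_add {n : ℕ} (C D : Matrix (Fin n) (Fin n) ℂ) (u : EuclideanSpace ℂ (Fin n)) :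
    qf (C + D) u = qf C u + qf D u := by
  unfold qf
  rw [map_add, LinearMap.add_apply, inner_add_right, map_add]

lemma qf_smul {n : ℕ} (r : ℝ) (C : Matrix (Fin n) (Fin n) ℂ) (u : EuclideanSpace ℂ (Fin n)) :
    qf ((r : ℂ) • C) u = r * qf C u := by
  unfold qf
  rw [_root_.map_smul, LinearMap.smul_apply, inner_smul_right]
  simp [Complex.mul_re]

lemma qf_one {n : ℕ} (u : EuclideanSpace ℂ (Fin n)) (hu : ‖u‖ = 1) :
    qf (1 : Matrix (Fin n) (Fin n) ℂ) u = 1 := by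
  unfold qf
  have : Matrix.toEuclideanLin (1 : Matrix (Fin n) (Fin n) ℂ) u = u := by
    apply (WithLp.equiv 2 (Fin n → ℂ)).injective
    exact Matrix.one_mulVec _
  rw [this, inner_self_eq_norm_sq_to_K, hu]
  norm_num

lemma qf_nonneg_of_posSemidef {n : ℕ} {C : Matrix (Fin n) (Fin n) ℂ} (hC : C.PosSemidef)
    (u : EuclideanSpace ℂ (Fin n)) : 0 ≤ qf C u := by
  unfold qf
  have h1 : (inner (𝕜 := ℂ) u ((Matrix.toEuclideanLin C) u))
      = dotProduct (star (WithLp.equiv 2 (Fin n → ℂ) u))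
        (C *ᵥ (WithLp.equiv 2 (Fin n → ℂ) u)) := by
    exact (EuclideanSpace.inner_eq_star_dotProduct _ _).trans (dotProduct_comm _ _)
  rw [h1]
  have := hC.dotProduct_mulVec_nonneg (WithLp.equiv 2 (Fin n → ℂ) u)
  exact (Complex.le_def.mp this).1

lemma cfc_mulVec {n : ℕ} (B : Matrix (Fin n) (Fin n) ℂ) (hB : B.IsHermitian) (f : ℝ → ℝ)
    (i : Fin n) :
    (cfc f B) *ᵥ ⇑(hB.eigenvectorBasis i) = f (hB.eigenvalues i) • ⇑(hB.eigenvectorBasis i) := by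
  rw [hB.cfc_eq]
  unfold Matrix.IsHermitian.cfc
  rw [Unitary.conjStarAlgAut_apply]
  rw [← Matrix.mulVec_mulVec, ← Matrix.mulVec_mulVec, hB.star_eigenvectorUnitary_mulVec,
    Matrix.diagonal_mulVec_single]
  have h1 : Pi.single (M := fun _ : Fin n => ℂ) i
      ((RCLike.ofReal ∘ f ∘ hB.eigenvalues) i * 1)
      = ((f (hB.eigenvalues i) : ℂ)) • (Pi.single i 1 : Fin n → ℂ) := by
    ext j
    rcases eq_or_ne j i with rfl | hji
    · simp
    · simp [Pi.single_eq_of_ne hji]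
  rw [h1, Matrix.mulVec_smul, hB.eigenvectorUnitary_mulVec]
  exact (RCLike.real_smul_eq_coe_smul (K := ℂ) _ _).symm

end QuadraticForms

section Jensen

lemma exists_subgradient {I : Set ℝ} (hI : IsOpen I) {f : ℝ → ℝ} (hf : ConvexOn ℝ I f)
    {m : ℝ} (hm : m ∈ I) : ∃ s : ℝ, ∀ t ∈ I, f m + s * (t - m) ≤ f t := by
  obtain ⟨ε, hε, hball⟩ := Metric.isOpen_iff.mp hI m hm
  have hy0 : m + ε / 2 ∈ I := hball (by
    simp only [Metric.mem_ball, Real.dist_eq, add_sub_cancel_left]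
    rw [abs_of_pos (by linarith)]; linarith)
  have hx0 : m - ε / 2 ∈ I := hball (by
    simp only [Metric.mem_ball, Real.dist_eq, sub_sub_cancel_left]
    rw [abs_of_neg (by linarith)]; linarith)
  set y0 := m + ε / 2
  set x0 := m - ε / 2
  have hy0m : m < y0 := by simp [y0]; linarith
  have hx0m : x0 < m := by simp [x0]; linarith
  set A : Set ℝ := (fun y => (f y - f m) / (y - m)) '' (I ∩ Set.Ioi m) with hA
  have hAne : A.Nonempty := ⟨_, ⟨y0, ⟨hy0, hy0m⟩, rfl⟩⟩
  have hlb : ∀ t ∈ I, t < m → ∀ z ∈ A, (f t - f m) / (t - m) ≤ z := by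
    rintro t ht htm z ⟨y, ⟨hy, hym⟩, rfl⟩
    exact hf.secant_mono hm ht hy (ne_of_lt htm) (ne_of_gt hym) (le_of_lt (htm.trans hym))
  have hbdd : BddBelow A := ⟨(f x0 - f m) / (x0 - m), fun z hz => hlb x0 hx0 hx0m z hz⟩
  refine ⟨sInf A, fun t ht => ?_⟩
  rcases lt_trichotomy t m with htm | rfl | hmt
  · have h1 : (f t - f m) / (t - m) ≤ sInf A := le_csInf hAne (hlb t ht htm)
    have h2 : t - m < 0 := by linarith
    rw [div_le_iff_of_neg h2] at h1
    linarith
  · simp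
  · have h1 : sInf A ≤ (f t - f m) / (t - m) := csInf_le hbdd ⟨t, ⟨ht, hmt⟩, rfl⟩
    have h2 : 0 < t - m := by linarith
    rw [le_div_iff₀ h2] at h1
    linarith

lemma spec_compact {A : Type*} [CStarAlgebra A] [PartialOrder A] [StarOrderedRing A]
    (a : A) (ha : IsSelfAdjoint a) : IsCompact (spectrum ℝ a) := by
  have h1 : Complex.reCLM '' (spectrum ℂ a) = spectrum ℝ a := ha.spectrumRestricts.image
  rw [← h1]
  exact (spectrum.isCompact a).image Complex.reCLM.continuous

lemma herm {A : Type*} [CStarAlgebra A] [PartialOrder A] [StarOrderedRing A] {n : ℕ}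
    (φ : A →ₗ[ℂ] Matrix (Fin n) (Fin n) ℂ)
    (hφ_pos : ∀ x : A, 0 ≤ x → (φ x).PosSemidef)
    (x : A) (hx : IsSelfAdjoint x) : (φ x).IsHermitian := by
  rw [← CFC.posPart_sub_negPart x hx, map_sub]
  exact ((hφ_pos _ (CFC.posPart_nonneg x)).1).sub ((hφ_pos _ (CFC.negPart_nonneg x)).1)

lemma jensen_state {A : Type*} [CStarAlgebra A] [PartialOrder A] [StarOrderedRing A] {n : ℕ}
    [Nontrivial A]
    (φ : A →ₗ[ℂ] Matrix (Fin n) (Fin n) ℂ)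
    (hφ_pos : ∀ x : A, 0 ≤ x → (φ x).PosSemidef)
    (hφ_unital : φ 1 = 1)
    (I : Set ℝ) (hI_open : IsOpen I) (hI_conn : I.OrdConnected)
    (f : ℝ → ℝ) (hf : ConvexOn ℝ I f)
    (a : A) (ha : IsSelfAdjoint a) (hspec : spectrum ℝ a ⊆ I)
    (u : EuclideanSpace ℂ (Fin n)) (hu : ‖u‖ = 1) :
    f (qf (φ a) u) ≤ qf (φ (cfc f a)) u := by
  have hmono : ∀ x y : A, x ≤ y → qf (φ x) u ≤ qf (φ y) u := by
    intro x y hxy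
    have h := qf_nonneg_of_posSemidef (hφ_pos _ (sub_nonneg.2 hxy)) u
    rw [map_sub, qf_sub] at h
    linarith
  have hsmul : ∀ (r : ℝ) (x : A), φ (r • x) = (r : ℂ) • φ x := by
    intro r x
    rw [RCLike.real_smul_eq_coe_smul (K := ℂ) r x]
    exact φ.map_smul _ x
  have halg : ∀ r : ℝ, qf (φ (algebraMap ℝ A r)) u = r := by
    intro r
    rw [Algebra.algebraMap_eq_smul_one, hsmul, hφ_unital, qf_smul, qf_one u hu, mul_one]
  set m : ℝ := qf (φ a) u with hm
  have hne : (spectrum ℝ a).Nonempty := ha.spectrum_nonempty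
  have hcpt : IsCompact (spectrum ℝ a) := spec_compact a ha
  have ht2 : sSup (spectrum ℝ a) ∈ spectrum ℝ a := hcpt.sSup_mem hne
  have ht1 : sInf (spectrum ℝ a) ∈ spectrum ℝ a := hcpt.sInf_mem hne
  have hle2 : a ≤ algebraMap ℝ A (sSup (spectrum ℝ a)) :=
    (le_algebraMap_iff_spectrum_le (R := ℝ) (a := a) ha).mpr
      (fun x hx => le_csSup hcpt.bddAbove hx)
  have hle1 : algebraMap ℝ A (sInf (spectrum ℝ a)) ≤ a :=
    (algebraMap_le_iff_le_spectrum (R := ℝ) (a := a) ha).mpr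
      (fun x hx => csInf_le hcpt.bddBelow hx)
  have hmI : m ∈ I := by
    refine hI_conn.out (hspec ht1) (hspec ht2) ⟨?_, ?_⟩
    · have := hmono _ _ hle1; rwa [halg] at this
    · have := hmono _ _ hle2; rwa [halg] at this
  obtain ⟨s, hs⟩ := exists_subgradient hI_open hf hmI
  have hcont : ContinuousOn f I := hf.continuousOn hI_open
  have hkey : cfc (fun t => (f m - s * m) + s * t) a ≤ cfc f a := by
    refine cfc_mono (fun x hx => ?_) ?_ ?_
    · have := hs x (hspec hx)
      linarith
    · fun_prop
    · exact hcont.mono hspec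
  have haff : cfc (fun t => (f m - s * m) + s * t) a
      = algebraMap ℝ A (f m - s * m) + s • a := by
    rw [cfc_add a (fun _ => f m - s * m) (fun t => s * t) (by fun_prop) (by fun_prop),
      cfc_const _ a, cfc_const_mul_id s a]
  have := hmono _ _ (haff ▸ hkey)
  rw [map_add, qf_add, halg, hsmul, qf_smul] at this
  linarith

end Jensen

/-- Jensen's inequality with respect to (sub)majorization: if `φ : A → M_n(ℂ)` is a
positive unital map, `f` convex on an open interval `I`, and `a` selfadjoint with
spectrum in `I`, then for each `k` the sum of the `k` largest eigenvalues of `f(φ(a))`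
is at most that of `φ(f(a))`. -/
theorem jensen_matrix_majorization {A : Type*}
    [CStarAlgebra A] [PartialOrder A] [StarOrderedRing A] {n : ℕ}
    (φ : A →ₗ[ℂ] Matrix (Fin n) (Fin n) ℂ)
    (hφ_pos : ∀ x : A, 0 ≤ x → (φ x).PosSemidef) (hφ_unital : φ 1 = 1)
    (I : Set ℝ) (hI_open : IsOpen I) (hI_conn : I.OrdConnected)
    (f : ℝ → ℝ) (hf : ConvexOn ℝ I f)
    (a : A) (ha : IsSelfAdjoint a) (hspec : spectrum ℝ a ⊆ I) :
    ∀ k : ℕ, k ≤ n →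
      ∑ i ∈ Finset.filter (fun i : Fin n => (i : ℕ) < k) Finset.univ,
          eigDesc (cfc f (φ a)) i ≤
        ∑ i ∈ Finset.filter (fun i : Fin n => (i : ℕ) < k) Finset.univ,
          eigDesc (φ (cfc f a)) i := by
  intro k hk
  rcases Nat.eq_zero_or_pos n with hn | hn
  · subst hn
    simp
  · haveI : NeZero n := ⟨by omega⟩
    haveI : Nontrivial A := by
      refine ⟨0, 1, fun h01 => ?_⟩
      have h1 : (1 : Matrix (Fin n) (Fin n) ℂ) = 0 := by
        rw [← hφ_unital, ← h01, map_zero]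
      exact one_ne_zero h1
    set B := φ a with hBdef
    have hB : B.IsHermitian := herm φ hφ_pos a ha
    set C := cfc f B with hCdef
    have hC : C.IsHermitian := cfc_predicate f B
    set D := φ (cfc f a) with hDdef
    have hD : D.IsHermitian :=
      herm φ hφ_pos (cfc f a) (cfc_predicate f a)
    have hL : ∑ i ∈ Finset.filter (fun i : Fin n => (i : ℕ) < k) Finset.univ, eigDesc C i
        = dSortTop hC.eigenvalues k := by
      refine Finset.sum_congr rfl fun i _ => ?_
      rw [eigDesc, dif_pos hC]
    have hR : ∑ i ∈ Finset.filter (fun i : Fin n => (i : ℕ) < k) Finset.univ, eigDesc D i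
        = dSortTop hD.eigenvalues k := by
      refine Finset.sum_congr rfl fun i _ => ?_
      rw [eigDesc, dif_pos hD]
    rw [hL, hR]
    -- left-hand side: top `k` eigenvalues of `C = f(B)`.
    obtain ⟨T, hTcard, hTsum⟩ := exists_topSet hC.eigenvalues k hk
    have h1 : dSortTop hC.eigenvalues k = ∑ j ∈ T, qf C (hC.eigenvectorBasis j) := by
      rw [hTsum]
      exact Finset.sum_congr rfl fun j _ =>
        (qf_apply_self C hC.eigenvectorBasis _ hC.mulVec_eigenvectorBasis j).symm
    have hCB : ∀ i, C *ᵥ ⇑(hB.eigenvectorBasis i)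
        = (fun i => f (hB.eigenvalues i)) i • ⇑(hB.eigenvectorBasis i) :=
      fun i => cfc_mulVec B hB f i
    have h2 : ∑ j ∈ T, qf C (hC.eigenvectorBasis j)
        ≤ dSortTop (fun i => f (hB.eigenvalues i)) k :=
      kyFan C hB.eigenvectorBasis hC.eigenvectorBasis _ hCB T k hTcard hk
    -- middle step : Jensen for each eigenvector of `B`.
    obtain ⟨S, hScard, hSsum⟩ := exists_topSet (fun i => f (hB.eigenvalues i)) k hk
    have hunit : ∀ j, ‖hB.eigenvectorBasis j‖ = 1 :=
      fun j => hB.eigenvectorBasis.orthonormal.1 j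
    have hmuqf : ∀ j, hB.eigenvalues j = qf B (hB.eigenvectorBasis j) :=
      fun j => (qf_apply_self B hB.eigenvectorBasis _ hB.mulVec_eigenvectorBasis j).symm
    have h3 : dSortTop (fun i => f (hB.eigenvalues i)) k
        ≤ ∑ j ∈ S, qf D (hB.eigenvectorBasis j) := by
      rw [hSsum]
      refine Finset.sum_le_sum fun j _ => ?_
      have hj := jensen_state φ hφ_pos hφ_unital I hI_open hI_conn f hf a ha hspec
        (hB.eigenvectorBasis j) (hunit j)
      rw [hmuqf j]
      exact hj
    -- right-hand side via Ky Fan for `D`.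
    have h4 : ∑ j ∈ S, qf D (hB.eigenvectorBasis j) ≤ dSortTop hD.eigenvalues k :=
      kyFan D hD.eigenvectorBasis hB.eigenvectorBasis _ hD.mulVec_eigenvectorBasis S k hScard hk
    linarith
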